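/- Let χ : [0,1] → ℝ be continuously differentiable and suppose there exists c > 0 with χ(x) ≥ c for all x ∈ [0,1]. Let λ > 0 be such that λ·∫₀¹ x·χ(x)·v(x)² dx ≤ ∫₀¹ x·χ(x)·(v'(x))² dx for every continuously differentiable v : [0,1] → ℝ with v(1) = 0. Let α > 0, let g : [0,1] → ℝ be continuous, and let p, T : [0,1] → ℝ be twice continuously differentiable with p(1) = 0 and T(1) = 0, satisfying for all x ∈ [0,1] the identity α⁻¹·p(x)·x − (d/dx)(x·χ(x)·p'(x)) = (d/dx)(x·χ(x)·T'(x)) − g(x)·x. Then α⁻¹·∫₀¹ p(x)²·x dx + λ·∫₀¹ x·χ(x)·p(x)² dx ≤ ∫₀¹ χ(x)·(T'(x))²·x dx + α·∫₀¹ g(x)²·x dx. -/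

import Mathlib

open Set MeasureTheory intervalIntegral

private lemma int_congr_Ioo01 {f g : ℝ → ℝ}
    (h : ∀ x ∈ Set.Ioo (0:ℝ) 1, f x = g x) :
    ∫ x in (0:ℝ)..1, f x = ∫ x in (0:ℝ)..1, g x := by
  rw [intervalIntegral.integral_of_le zero_le_one,
      intervalIntegral.integral_of_le zero_le_one,
      MeasureTheory.integral_Ioc_eq_integral_Ioo,
      MeasureTheory.integral_Ioc_eq_integral_Ioo]
  exact MeasureTheory.setIntegral_congr_fun measurableSet_Ioo h

set_option maxHeartbeats 1000000 in
/-- Final a priori estimate on the costate: combining the energy estimate with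
ε = 1/(2α) and the weighted Poincaré inequality with constant λ for the weight
x·χ(x) yields α⁻¹‖p‖²_{L²ₓ} + λ‖p‖²_{L²_{xχ}} ≤ ‖T‖²_{Ḣ¹_{xχ}} + α‖g‖²_{L²ₓ}. -/
theorem costate_final_estimate
    (χ : ℝ → ℝ) (hχ : ContDiffOn ℝ 1 χ (Set.Icc 0 1))
    (c : ℝ) (hc : 0 < c) (hχc : ∀ x ∈ Set.Icc (0:ℝ) 1, c ≤ χ x)
    (lam : ℝ) (hlam : 0 < lam)
    (hpoincare : ∀ v : ℝ → ℝ, ContDiffOn ℝ 1 v (Set.Icc 0 1) → v 1 = 0 →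
      lam * ∫ x in (0:ℝ)..1, x * χ x * (v x) ^ 2
        ≤ ∫ x in (0:ℝ)..1, x * χ x * (deriv v x) ^ 2)
    (α : ℝ) (hα : 0 < α)
    (g : ℝ → ℝ) (hg : ContinuousOn g (Set.Icc 0 1))
    (p T : ℝ → ℝ)
    (hp : ContDiffOn ℝ 2 p (Set.Icc 0 1))
    (hT : ContDiffOn ℝ 2 T (Set.Icc 0 1))
    (hp1 : p 1 = 0) (hT1 : T 1 = 0)
    (heq : ∀ x ∈ Set.Icc (0:ℝ) 1,
      α⁻¹ * p x * x - deriv (fun y => y * χ y * deriv p y) x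
        = deriv (fun y => y * χ y * deriv T y) x - g x * x) :
    α⁻¹ * (∫ x in (0:ℝ)..1, (p x) ^ 2 * x)
      + lam * (∫ x in (0:ℝ)..1, x * χ x * (p x) ^ 2)
    ≤ (∫ x in (0:ℝ)..1, χ x * (deriv T x) ^ 2 * x)
      + α * (∫ x in (0:ℝ)..1, (g x) ^ 2 * x) := by
  set s : Set ℝ := Set.Icc 0 1 with hs_def
  have hsU : UniqueDiffOn ℝ s := uniqueDiffOn_Icc zero_lt_one
  set P : ℝ → ℝ := derivWithin p s with hP_def
  set Td : ℝ → ℝ := derivWithin T s with hTd_def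
  have hPc : ContDiffOn ℝ 1 P s := hp.derivWithin hsU (by norm_num)
  have hTdc : ContDiffOn ℝ 1 Td s := hT.derivWithin hsU (by norm_num)
  set qt : ℝ → ℝ := fun y => y * χ y * P y with hqt_def
  set rt : ℝ → ℝ := fun y => y * χ y * Td y with hrt_def
  have hqtc : ContDiffOn ℝ 1 qt s := (contDiff_id.contDiffOn.mul hχ).mul hPc
  have hrtc : ContDiffOn ℝ 1 rt s := (contDiff_id.contDiffOn.mul hχ).mul hTdc
  set Q : ℝ → ℝ := derivWithin qt s with hQ_def
  set R : ℝ → ℝ := derivWithin rt s with hR_def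
  have hQc : ContinuousOn Q s := hqtc.continuousOn_derivWithin hsU le_rfl
  have hRc : ContinuousOn R s := hrtc.continuousOn_derivWithin hsU le_rfl
  have hPcont : ContinuousOn P s := hPc.continuousOn
  have hTdcont : ContinuousOn Td s := hTdc.continuousOn
  have hpcont : ContinuousOn p s := hp.continuousOn
  have hχcont : ContinuousOn χ s := hχ.continuousOn
  have hid : ContinuousOn (fun x : ℝ => x) s := continuousOn_id
  -- deriv = derivWithin on the interior
  have hnhds : ∀ x ∈ Set.Ioo (0:ℝ) 1, s ∈ nhds x := fun x hx => Icc_mem_nhds hx.1 hx.2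
  have hderivp : ∀ x ∈ Set.Ioo (0:ℝ) 1, deriv p x = P x :=
    fun x hx => (derivWithin_of_mem_nhds (hnhds x hx)).symm
  have hderivT : ∀ x ∈ Set.Ioo (0:ℝ) 1, deriv T x = Td x :=
    fun x hx => (derivWithin_of_mem_nhds (hnhds x hx)).symm
  -- HasDerivAt facts on the interior
  have hHp : ∀ x ∈ Set.Ioo (0:ℝ) 1, HasDerivAt p (P x) x := fun x hx =>
    ((hp.differentiableOn (by norm_num) x (Set.mem_of_mem_of_subset hx Set.Ioo_subset_Icc_self)).hasDerivWithinAt).hasDerivAt (hnhds x hx)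
  have hHqt : ∀ x ∈ Set.Ioo (0:ℝ) 1, HasDerivAt qt (Q x) x := fun x hx =>
    ((hqtc.differentiableOn (by norm_num) x (Set.mem_of_mem_of_subset hx Set.Ioo_subset_Icc_self)).hasDerivWithinAt).hasDerivAt (hnhds x hx)
  have hHrt : ∀ x ∈ Set.Ioo (0:ℝ) 1, HasDerivAt rt (R x) x := fun x hx =>
    ((hrtc.differentiableOn (by norm_num) x (Set.mem_of_mem_of_subset hx Set.Ioo_subset_Icc_self)).hasDerivWithinAt).hasDerivAt (hnhds x hx)
  -- On the interior, deriv of the (unrestricted) flux functions equals Q, R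
  have hQeq : ∀ x ∈ Set.Ioo (0:ℝ) 1, deriv (fun y => y * χ y * deriv p y) x = Q x := by
    intro x hx
    have hev : (fun y => y * χ y * deriv p y) =ᶠ[nhds x] qt := by
      filter_upwards [Ioo_mem_nhds hx.1 hx.2] with y hy
      rw [hderivp y hy]
    rw [hev.deriv_eq, ← derivWithin_of_mem_nhds (f := qt) (hnhds x hx)]
  have hReq : ∀ x ∈ Set.Ioo (0:ℝ) 1, deriv (fun y => y * χ y * deriv T y) x = R x := by
    intro x hx
    have hev : (fun y => y * χ y * deriv T y) =ᶠ[nhds x] rt := by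
      filter_upwards [Ioo_mem_nhds hx.1 hx.2] with y hy
      rw [hderivT y hy]
    rw [hev.deriv_eq, ← derivWithin_of_mem_nhds (f := rt) (hnhds x hx)]
  -- Integrability of all the integrands we use
  have hint : ∀ {f : ℝ → ℝ}, ContinuousOn f s → IntervalIntegrable f volume 0 1 :=
    fun hf => ContinuousOn.intervalIntegrable_of_Icc zero_le_one hf
  -- Integration by parts via FTC, for p (flux qt) and T (flux rt)
  have ibp : ∀ (u : ℝ → ℝ), ContDiffOn ℝ 1 u s → u 0 = 0 →
      ∫ x in (0:ℝ)..1, (derivWithin u s x * p x + u x * P x) = 0 := by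
    intro u hu hu0
    have hcont : ContinuousOn (fun x => u x * p x) s := hu.continuousOn.mul hpcont
    have hDc : ContinuousOn (fun x => derivWithin u s x * p x + u x * P x) s :=
      ((hu.continuousOn_derivWithin hsU le_rfl).mul hpcont).add (hu.continuousOn.mul hPcont)
    have := intervalIntegral.integral_eq_sub_of_hasDeriv_right_of_le zero_le_one hcont
      (fun x hx => by
        have hu' : HasDerivAt u (derivWithin u s x) x :=
          ((hu.differentiableOn (by norm_num) x (Set.mem_of_mem_of_subset hx Set.Ioo_subset_Icc_self)).hasDerivWithinAt).hasDerivAt (hnhds x hx)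
        exact ((hu'.mul (hHp x hx))).hasDerivWithinAt)
      (hint hDc)
    rw [this, hp1, hu0]; ring
  have hqt0 : qt 0 = 0 := by simp [hqt_def]
  have hrt0 : rt 0 = 0 := by simp [hrt_def]
  have ibp_q : ∫ x in (0:ℝ)..1, (Q x * p x + qt x * P x) = 0 := ibp qt hqtc hqt0
  have ibp_r : ∫ x in (0:ℝ)..1, (R x * p x + rt x * P x) = 0 := ibp rt hrtc hrt0
  -- Named integrals
  set A := ∫ x in (0:ℝ)..1, (p x) ^ 2 * x with hA
  set B := ∫ x in (0:ℝ)..1, qt x * P x with hB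
  set C := ∫ x in (0:ℝ)..1, rt x * P x with hC
  set D := ∫ x in (0:ℝ)..1, g x * p x * x with hD
  set E := ∫ x in (0:ℝ)..1, x * χ x * (Td x) ^ 2 with hE
  set Fi := ∫ x in (0:ℝ)..1, (g x) ^ 2 * x with hFi
  have hAint : IntervalIntegrable (fun x => (p x) ^ 2 * x) volume 0 1 :=
    hint ((hpcont.pow 2).mul hid)
  have hBint : IntervalIntegrable (fun x => qt x * P x) volume 0 1 :=
    hint (hqtc.continuousOn.mul hPcont)
  have hCint : IntervalIntegrable (fun x => rt x * P x) volume 0 1 :=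
    hint (hrtc.continuousOn.mul hPcont)
  have hDint : IntervalIntegrable (fun x => g x * p x * x) volume 0 1 :=
    hint ((hg.mul hpcont).mul hid)
  have hEint : IntervalIntegrable (fun x => x * χ x * (Td x) ^ 2) volume 0 1 :=
    hint ((hid.mul hχcont).mul (hTdcont.pow 2))
  have hFiint : IntervalIntegrable (fun x => (g x) ^ 2 * x) volume 0 1 :=
    hint ((hg.pow 2).mul hid)
  have hQpint : IntervalIntegrable (fun x => Q x * p x) volume 0 1 := hint (hQc.mul hpcont)
  have hRpint : IntervalIntegrable (fun x => R x * p x) volume 0 1 := hint (hRc.mul hpcont)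
  -- Step 3: from heq multiplied by p and integrated
  have key : α⁻¹ * A - ∫ x in (0:ℝ)..1, Q x * p x
      = (∫ x in (0:ℝ)..1, R x * p x) - D := by
    have h1 : ∫ x in (0:ℝ)..1, (α⁻¹ * ((p x)^2 * x) - Q x * p x)
        = ∫ x in (0:ℝ)..1, (R x * p x - g x * p x * x) := by
      apply int_congr_Ioo01
      intro x hx
      have h := heq x (Set.mem_of_mem_of_subset hx Set.Ioo_subset_Icc_self)
      rw [hQeq x hx, hReq x hx] at h
      have := congrArg (· * p x) h
      nlinarith [this]
    rw [intervalIntegral.integral_sub (hAint.const_mul α⁻¹) hQpint,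
        intervalIntegral.integral_sub hRpint hDint] at h1
    simpa [intervalIntegral.integral_const_mul, hA, hD] using h1
  -- ∫ Q p = -B, ∫ R p = -C
  have hQp : ∫ x in (0:ℝ)..1, Q x * p x = -B := by
    have := intervalIntegral.integral_add hQpint hBint
    rw [ibp_q] at this
    linarith [this.symm]
  have hRp : ∫ x in (0:ℝ)..1, R x * p x = -C := by
    have := intervalIntegral.integral_add hRpint hCint
    rw [ibp_r] at this
    linarith [this.symm]
  have energy : α⁻¹ * A + B = -C - D := by rw [hQp, hRp] at key; linarith
  -- Step 4: pointwise Young inequalities, integrated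
  have young : -C - D ≤ (1/2) * E + (1/2) * B + (α/2) * Fi + (1/(2*α)) * A := by
    have hLcont : ContinuousOn (fun x => -(rt x * P x) - g x * p x * x) s :=
      ((hrtc.continuousOn.mul hPcont).neg).sub ((hg.mul hpcont).mul hid)
    have hRcont : ContinuousOn (fun x => (1/2) * (x * χ x * (Td x)^2) + (1/2) * (qt x * P x)
        + (α/2) * ((g x)^2 * x) + (1/(2*α)) * ((p x)^2 * x)) s :=
      (((continuousOn_const.mul ((hid.mul hχcont).mul (hTdcont.pow 2))).add
        (continuousOn_const.mul (hqtc.continuousOn.mul hPcont))).add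
        (continuousOn_const.mul ((hg.pow 2).mul hid))).add
        (continuousOn_const.mul ((hpcont.pow 2).mul hid))
    have hmono : ∫ x in (0:ℝ)..1, (-(rt x * P x) - g x * p x * x)
        ≤ ∫ x in (0:ℝ)..1, ((1/2) * (x * χ x * (Td x)^2) + (1/2) * (qt x * P x)
            + (α/2) * ((g x)^2 * x) + (1/(2*α)) * ((p x)^2 * x)) := by
      apply intervalIntegral.integral_mono_on zero_le_one (hint hLcont) (hint hRcont)
      intro x hx
      have hx0 : (0:ℝ) ≤ x := hx.1
      have hχ0 : (0:ℝ) ≤ χ x := le_trans hc.le (hχc x hx)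
      have h1 : -(rt x * P x) ≤ (1/2) * (x * χ x * (Td x)^2) + (1/2) * (qt x * P x) := by
        have hw : (0:ℝ) ≤ x * χ x := mul_nonneg hx0 hχ0
        have : 0 ≤ x * χ x * (Td x + P x)^2 := mul_nonneg hw (sq_nonneg _)
        simp only [hqt_def, hrt_def]
        nlinarith [this]
      have h2 : -(g x * p x * x) ≤ (α/2) * ((g x)^2 * x) + (1/(2*α)) * ((p x)^2 * x) := by
        have key2 : 0 ≤ x * (α * g x + p x)^2 := mul_nonneg hx0 (sq_nonneg _)
        have key3 : 0 ≤ (1/(2*α)) * (x * (α * g x + p x)^2) :=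
          mul_nonneg (by positivity) key2
        have hxeq : (α/2) * ((g x)^2 * x) + (1/(2*α)) * ((p x)^2 * x)
            - (-(g x * p x * x)) = (1/(2*α)) * (x * (α * g x + p x)^2) := by
          field_simp; ring
        linarith [key3, hxeq]
      linarith
    have hCnegint : IntervalIntegrable (fun x => -(rt x * P x)) volume 0 1 :=
      hint (hrtc.continuousOn.mul hPcont).neg
    have hsplit : ∫ x in (0:ℝ)..1, (-(rt x * P x) - g x * p x * x) = -C - D := by
      rw [intervalIntegral.integral_sub hCnegint hDint, intervalIntegral.integral_neg]
    have hsplit2 : ∫ x in (0:ℝ)..1, ((1/2) * (x * χ x * (Td x)^2) + (1/2) * (qt x * P x)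
            + (α/2) * ((g x)^2 * x) + (1/(2*α)) * ((p x)^2 * x))
        = (1/2) * E + (1/2) * B + (α/2) * Fi + (1/(2*α)) * A := by
      rw [intervalIntegral.integral_add (((hEint.const_mul (1/2)).add (hBint.const_mul (1/2))).add (hFiint.const_mul (α/2))) (hAint.const_mul (1/(2*α))),
          intervalIntegral.integral_add ((hEint.const_mul (1/2)).add (hBint.const_mul (1/2))) (hFiint.const_mul (α/2)),
          intervalIntegral.integral_add (hEint.const_mul (1/2)) (hBint.const_mul (1/2))]
      simp only [intervalIntegral.integral_const_mul]
      rfl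
    rw [hsplit, hsplit2] at hmono
    exact hmono
  -- Combine: α⁻¹ A + B ≤ E + α Fi
  have main : α⁻¹ * A + B ≤ E + α * Fi := by
    have h2α : (1/(2*α)) * 2 = α⁻¹ := by field_simp
    have h3 : (1/(2*α)) * 2 * A = α⁻¹ * A := by rw [h2α]
    linarith [energy, young, h3]
  -- Step 5: Poincaré inequality for p
  have hpoin : lam * (∫ x in (0:ℝ)..1, x * χ x * (p x) ^ 2) ≤ B := by
    have h := hpoincare p (hp.of_le (by norm_num)) hp1
    have heqB : ∫ x in (0:ℝ)..1, x * χ x * (deriv p x) ^ 2 = B := by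
      apply int_congr_Ioo01
      intro x hx
      rw [hderivp x hx]
      simp only [hqt_def]; ring
    rw [heqB] at h
    exact h
  -- Goal-side integral identifications
  have hgoalE : ∫ x in (0:ℝ)..1, χ x * (deriv T x) ^ 2 * x = E := by
    apply int_congr_Ioo01
    intro x hx
    rw [hderivT x hx]; ring
  rw [hgoalE]
  linarith [main, hpoin]
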